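/- Let R₁,…,R_m be languages over a finite alphabet Σ, let ◊ be a fresh symbol not in Σ, and define over Σ ∪ {◊}: B_i is the set of words u₁v₁u₂v₂…u_tv_t (with all u_j, v_j single symbols) such that u₁u₂…u_t ∈ R_i◊* and v₁v₂…v_t ∈ R_i◊*, and B is the set of such alternating words with u_j ≠ v_j for some j. Then the intersection R₁ ∩ … ∩ R_m contains at least two distinct words if and only if B ∩ B₁ ∩ … ∩ B_m is nonempty. -/

import Mathlib

/-- Perfect shuffle of two (equal-length) words: `u₁v₁u₂v₂…`. -/
def perfectShuffle {α : Type} (u v : List α) : List α :=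
  (u.zip v).flatMap fun p => [p.1, p.2]

/-- The padded language `R◊*`: words of `R` (mapped over `some`) padded on the
right by copies of the dummy symbol `◊ = none`. -/
def padLang {α : Type} (R : Set (List α)) : Set (List (Option α)) :=
  {w | ∃ u ∈ R, ∃ k : ℕ, w = u.map some ++ List.replicate k (none : Option α)}

/-- `B_i`: perfect shuffles `u₁v₁…u_tv_t` of two equal-length words, both of which
belong to `R_i◊*`. -/
def shuffleLang {α : Type} (R : Set (List α)) : Set (List (Option α)) :=
  {w | ∃ u v : List (Option α), u.length = v.length ∧
        u ∈ padLang R ∧ v ∈ padLang R ∧ w = perfectShuffle u v}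

/-- `B`: perfect shuffles of two equal-length words that differ in some position. -/
def shuffleDiffLang (α : Type) : Set (List (Option α)) :=
  {w | ∃ u v : List (Option α), u.length = v.length ∧ u ≠ v ∧ w = perfectShuffle u v}

lemma perfectShuffle_cons {α : Type} (a b : α) (u v : List α) :
    perfectShuffle (a::u) (b::v) = a::b::perfectShuffle u v := by
  simp [perfectShuffle]

lemma perfectShuffle_inj {α : Type} {u v u' v' : List α}
    (h1 : u.length = v.length) (h2 : u'.length = v'.length)
    (h : perfectShuffle u v = perfectShuffle u' v') : u = u' ∧ v = v' := by
  induction u generalizing v u' v' with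
  | nil =>
    have hv : v = [] := List.length_eq_zero_iff.mp h1.symm
    subst hv
    cases u' with
    | nil =>
      have : v' = [] := List.length_eq_zero_iff.mp h2.symm
      simp [this]
    | cons a' u'' =>
      cases v' with
      | nil => simp at h2
      | cons b' v'' => simp [perfectShuffle, perfectShuffle_cons] at h
  | cons a u ih =>
    cases v with
    | nil => simp at h1
    | cons b v =>
      cases u' with
      | nil =>
        have : v' = [] := List.length_eq_zero_iff.mp h2.symm
        subst this
        simp [perfectShuffle, perfectShuffle_cons] at h
      | cons a' u'' =>
        cases v' with
        | nil => simp at h2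
        | cons b' v'' =>
          rw [perfectShuffle_cons, perfectShuffle_cons] at h
          obtain ⟨ha, hb, hrest⟩ : a = a' ∧ b = b' ∧ perfectShuffle u v = perfectShuffle u'' v'' := by
            simpa using h
          have := ih (by simpa using h1) (by simpa using h2) hrest
          simp [ha, hb, this.1, this.2]

lemma filterMap_pad {α : Type} (x : List α) (k : ℕ) :
    (x.map some ++ List.replicate k (none : Option α)).filterMap id = x := by
  simp

lemma pad_ne {α : Type} {x y : List α} (hxy : x ≠ y) (j k : ℕ) :
    x.map some ++ List.replicate j (none : Option α) ≠ y.map some ++ List.replicate k none := by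
  intro h
  apply hxy
  have := congrArg (List.filterMap id) h
  simpa [filterMap_pad] using this

/-- `R₁ ∩ … ∩ R_m` contains at least two distinct words iff
`B ∩ B₁ ∩ … ∩ B_m` is nonempty. -/
theorem two_words_in_intersection_iff_shuffle_nonempty
    {α : Type} [Fintype α] {m : ℕ} (R : Fin m → Set (List α)) :
    (∃ x y : List α, (∀ i, x ∈ R i) ∧ (∀ i, y ∈ R i) ∧ x ≠ y) ↔
      (shuffleDiffLang α ∩ ⋂ i, shuffleLang (R i)).Nonempty := by
  constructor
  · rintro ⟨x, y, hx, hy, hxy⟩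
    set t := max x.length y.length with ht
    set u : List (Option α) := x.map some ++ List.replicate (t - x.length) none with hu
    set v : List (Option α) := y.map some ++ List.replicate (t - y.length) none with hv
    have hlu : u.length = t := by
      simp [hu, Nat.add_sub_cancel' (le_max_left _ _)]; omega
    have hlv : v.length = t := by
      simp [hv, Nat.add_sub_cancel' (le_max_right _ _)]; omega
    have hlen : u.length = v.length := by rw [hlu, hlv]
    have hne : u ≠ v := pad_ne hxy _ _
    refine ⟨perfectShuffle u v, ⟨u, v, hlen, hne, rfl⟩, ?_⟩
    rw [Set.mem_iInter]
    intro i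
    exact ⟨u, v, hlen, ⟨x, hx i, _, rfl⟩, ⟨y, hy i, _, rfl⟩, rfl⟩
  · rintro ⟨w, ⟨u, v, hlen, hne, rfl⟩, hI⟩
    rw [Set.mem_iInter] at hI
    -- for each i, u ∈ padLang (R i) and v ∈ padLang (R i)
    have key : ∀ i, u ∈ padLang (R i) ∧ v ∈ padLang (R i) := by
      intro i
      obtain ⟨u', v', hlen', hu', hv', hw⟩ := hI i
      obtain ⟨h1, h2⟩ := perfectShuffle_inj hlen' hlen hw.symm
      subst h1; subst h2
      exact ⟨hu', hv'⟩
    rcases Nat.eq_zero_or_pos m with hm | hm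
    · -- m = 0 : extract a symbol from the difference of u, v
      subst hm
      have : ∃ n : ℕ, ∃ h : n < u.length, ∃ h' : n < v.length, u[n] ≠ v[n] := by
        by_contra hcon
        push_neg at hcon
        exact hne (List.ext_getElem hlen fun n h h' => hcon n h h')
      obtain ⟨n, h, h', hne'⟩ := this
      have : ∃ a : α, u[n] = some a ∨ v[n] = some a := by
        cases hu : u[n] with
        | none =>
          cases hv : v[n] with
          | none => exact absurd (hu.trans hv.symm) hne'
          | some a => exact ⟨a, Or.inr rfl⟩
        | some a => exact ⟨a, Or.inl rfl⟩
      obtain ⟨a, -⟩ := this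
      exact ⟨[], [a], fun i => i.elim0, fun i => i.elim0, by simp⟩
    · obtain ⟨i0⟩ : Nonempty (Fin m) := ⟨⟨0, hm⟩⟩
      refine ⟨u.filterMap id, v.filterMap id, ?_, ?_, ?_⟩
      · intro i
        obtain ⟨⟨x, hx, k, hxu⟩, -⟩ := key i
        rw [hxu, filterMap_pad]; exact hx
      · intro i
        obtain ⟨-, y, hy, k, hyv⟩ := key i
        rw [hyv, filterMap_pad]; exact hy
      · -- u ≠ v with the padded structure implies filterMaps differ
        obtain ⟨⟨x, -, j, hxu⟩, y, -, k, hyv⟩ := key i0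
        rw [hxu, hyv, filterMap_pad, filterMap_pad]
        intro hxy
        subst hxy
        apply hne
        rw [hxu, hyv]
        have : j = k := by
          rw [hxu, hyv] at hlen
          simpa using hlen
        rw [this]
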